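/- The n-th moment of the arcsine law on [-2,2] (density 1/(π√(4-t²))) equals binomial(n, n/2) for n even and 0 for n odd. -/

import Mathlib

open Real MeasureTheory intervalIntegral Set Finset

lemma binom_prod (m : ℕ) :
    ((2 * m).choose m : ℝ) = 4 ^ m * ∏ i ∈ range m, (2 * (i : ℝ) + 1) / (2 * i + 2) := by
  induction m with
  | zero => simp
  | succ k ih =>
    have h := Nat.succ_mul_centralBinom_succ k
    have h' : ((k : ℝ) + 1) * ((2 * (k + 1)).choose (k + 1) : ℝ)
        = 2 * (2 * k + 1) * ((2 * k).choose k : ℝ) := by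
      exact_mod_cast congrArg (Nat.cast : ℕ → ℝ) h
    have hk : ((k : ℝ) + 1) ≠ 0 := by positivity
    have hC : ((2 * (k + 1)).choose (k + 1) : ℝ)
        = 2 * (2 * k + 1) * ((2 * k).choose k : ℝ) / (k + 1) := by
      field_simp
      linarith [h']
    rw [prod_range_succ, hC]
    rw [ih]
    push_cast
    field_simp
    ring

lemma cos_pow_odd (k : ℕ) : (∫ x in (0:ℝ)..π, Real.cos x ^ (2 * k + 1)) = 0 := by
  induction k with
  | zero => simp
  | succ k ih =>
    have : 2 * (k + 1) + 1 = 2 * k + 1 + 2 := by ring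
    rw [this, integral_cos_pow, ih]
    simp

lemma cos_pow_even (m : ℕ) :
    (∫ x in (0:ℝ)..π, Real.cos x ^ (2 * m)) = π * ∏ i ∈ range m, (2 * (i : ℝ) + 1) / (2 * i + 2) := by
  induction m with
  | zero => simp
  | succ k ih =>
    have : 2 * (k + 1) = 2 * k + 2 := by ring
    rw [this, integral_cos_pow, ih, prod_range_succ, Real.sin_pi, Real.sin_zero]
    push_cast
    ring

lemma g_meas (n : ℕ) : Measurable (fun t : ℝ => t ^ n / (π * Real.sqrt (4 - t ^ 2))) := by
  fun_prop

lemma int_right (n : ℕ) :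
    IntervalIntegrable (fun t : ℝ => t ^ n / (π * Real.sqrt (4 - t ^ 2))) volume 0 2 := by
  have hmaj : IntervalIntegrable
      (fun t : ℝ => 2 ^ n / π * (2 - t) ^ (-(1/2) : ℝ)) volume 0 2 := by
    have h := (intervalIntegral.intervalIntegrable_rpow'
      (a := 2) (b := 0) (r := -(1/2)) (by norm_num)).comp_sub_left 2
    simpa using h.const_mul (2 ^ n / π)
  refine hmaj.mono_fun' ((g_meas n).aestronglyMeasurable) ?_
  rw [uIoc_of_le (by norm_num : (0:ℝ) ≤ 2)]
  refine (ae_restrict_iff' measurableSet_Ioc).2 (Filter.Eventually.of_forall ?_)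
  intro x hx
  rcases eq_or_lt_of_le hx.2 with h2 | h2
  · subst h2
    norm_num [Real.zero_rpow]
  · have h0 : (0:ℝ) < 2 - x := by linarith
    have hrw : (2 - x) ^ (-(1/2) : ℝ) = (π * Real.sqrt (2 - x))⁻¹ * π := by
      rw [Real.rpow_neg h0.le, Real.sqrt_eq_rpow]
      field_simp
    have hs : Real.sqrt (2 - x) ≤ Real.sqrt (4 - x ^ 2) := by
      apply Real.sqrt_le_sqrt; nlinarith [hx.1]
    have hd : (0:ℝ) < π * Real.sqrt (2 - x) := by positivity
    have : ‖x ^ n / (π * Real.sqrt (4 - x ^ 2))‖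
        ≤ 2 ^ n / (π * Real.sqrt (2 - x)) := by
      rw [norm_div, norm_pow]
      have hden : ‖π * Real.sqrt (4 - x ^ 2)‖ = π * Real.sqrt (4 - x ^ 2) := by
        rw [Real.norm_eq_abs, abs_of_nonneg (by positivity)]
      rw [hden, Real.norm_eq_abs]
      apply div_le_div₀ (by positivity) _ hd (by
        apply mul_le_mul_of_nonneg_left hs pi_pos.le)
      exact pow_le_pow_left₀ (abs_nonneg x) (by rw [abs_le]; constructor <;> linarith [hx.1, hx.2]) n
    calc ‖x ^ n / (π * Real.sqrt (4 - x ^ 2))‖ ≤ 2 ^ n / (π * Real.sqrt (2 - x)) := this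
      _ = 2 ^ n / π * (2 - x) ^ (-(1/2) : ℝ) := by rw [hrw]; field_simp

lemma int_g (n : ℕ) :
    IntervalIntegrable (fun t : ℝ => t ^ n / (π * Real.sqrt (4 - t ^ 2))) volume (-2) 2 := by
  have hR := int_right n
  have hL' : IntervalIntegrable
      (fun x : ℝ => (-x) ^ n / (π * Real.sqrt (4 - (-x) ^ 2))) volume 0 (-2) := by
    have := (IntervalIntegrable.iff_comp_neg
      (f := fun t : ℝ => t ^ n / (π * Real.sqrt (4 - t ^ 2))) (a := 0) (b := 2)).mp hR
    simpa using this
  have hfun : (fun t : ℝ => t ^ n / (π * Real.sqrt (4 - t ^ 2)))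
      = fun x : ℝ => (-1 : ℝ) ^ n * ((-x) ^ n / (π * Real.sqrt (4 - (-x) ^ 2))) := by
    funext x
    rw [neg_sq]
    rcases Nat.even_or_odd n with h | h
    · rw [h.neg_pow x, h.neg_one_pow, one_mul]
    · rw [h.neg_pow x, h.neg_one_pow]; ring
  have hL : IntervalIntegrable (fun t : ℝ => t ^ n / (π * Real.sqrt (4 - t ^ 2))) volume (-2) 0 := by
    rw [hfun]
    exact hL'.symm.const_mul ((-1 : ℝ) ^ n)
  exact hL.trans hR


lemma key_eq (n : ℕ) {x : ℝ} (hx : x ∈ Ioo (-(π/2)) (π/2)) :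
    (2 * Real.cos x) • ((2 * Real.sin x) ^ n / (π * Real.sqrt (4 - (2 * Real.sin x) ^ 2)))
      = (2 * Real.sin x) ^ n / π := by
  have hc : 0 < Real.cos x := Real.cos_pos_of_mem_Ioo hx
  have h4 : 4 - (2 * Real.sin x) ^ 2 = (2 * Real.cos x) ^ 2 := by
    have := Real.sin_sq_add_cos_sq x
    ring_nf
    nlinarith [this]
  rw [h4, Real.sqrt_sq (by positivity)]
  rw [smul_eq_mul]
  field_simp

lemma subst_eq (n : ℕ) :
    (∫ t in (-2 : ℝ)..2, t ^ n / (π * Real.sqrt (4 - t ^ 2)))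
      = ∫ x in (-(π/2))..(π/2),
          (2 * Real.cos x) • ((2 * Real.sin x) ^ n / (π * Real.sqrt (4 - (2 * Real.sin x) ^ 2))) := by
  have hab : -(π/2) ≤ π/2 := by linarith [pi_pos]
  have hmin : min (-(π/2)) (π/2) = -(π/2) := min_eq_left hab
  have hmax : max (-(π/2)) (π/2) = π/2 := max_eq_right hab
  set g : ℝ → ℝ := fun t => t ^ n / (π * Real.sqrt (4 - t ^ 2)) with hg
  have himage : (fun x : ℝ => 2 * Real.sin x) '' Ioo (-(π/2)) (π/2) ⊆ Ioo (-2 : ℝ) 2 := by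
    rintro _ ⟨x, hx, rfl⟩
    dsimp only
    constructor
    · have : Real.sin (-(π/2)) < Real.sin x :=
        Real.sin_lt_sin_of_lt_of_le_pi_div_two le_rfl hx.2.le hx.1
      simp only [Real.sin_neg, Real.sin_pi_div_two] at this
      linarith
    · have : Real.sin x < Real.sin (π/2) :=
        Real.sin_lt_sin_of_lt_of_le_pi_div_two hx.1.le le_rfl hx.2
      simp only [Real.sin_pi_div_two] at this
      linarith
  have himage2 : (fun x : ℝ => 2 * Real.sin x) '' Set.uIcc (-(π/2)) (π/2) ⊆ Icc (-2 : ℝ) 2 := by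
    rintro _ ⟨x, _, rfl⟩
    dsimp only
    constructor
    · nlinarith [Real.neg_one_le_sin x]
    · nlinarith [Real.sin_le_one x]
  have hgc : ContinuousOn g (Ioo (-2 : ℝ) 2) := by
    apply ContinuousOn.div (by fun_prop) (by fun_prop)
    intro t ht
    have h4 : (0:ℝ) < 4 - t ^ 2 := by nlinarith [ht.1, ht.2]
    have := Real.sqrt_pos.mpr h4
    positivity
  have hg1 : IntegrableOn g (Icc (-2 : ℝ) 2) := by
    have := (int_g n)
    rwa [intervalIntegrable_iff_integrableOn_Icc_of_le (by norm_num)] at this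
  have hcont2 : Continuous fun x : ℝ => (2 * Real.sin x) ^ n / π := by fun_prop
  have hg2 : IntegrableOn
      (fun x => (2 * Real.cos x) • (g ∘ fun x : ℝ => 2 * Real.sin x) x) (Set.uIcc (-(π/2)) (π/2)) := by
    rw [uIcc_of_le hab, integrableOn_Icc_iff_integrableOn_Ioo]
    refine (((hcont2.intervalIntegrable (-(π/2)) (π/2)).1).mono_set
      Set.Ioo_subset_Ioc_self).congr_fun ?_ measurableSet_Ioo
    intro x hx
    exact (key_eq n hx).symm
  have h := intervalIntegral.integral_comp_smul_deriv'''
    (f := fun x : ℝ => 2 * Real.sin x) (f' := fun x : ℝ => 2 * Real.cos x) (g := g)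
    (a := -(π/2)) (b := π/2)
    (by fun_prop)
    (by
      intro x hx
      exact ((Real.hasDerivAt_sin x).const_mul 2).hasDerivWithinAt)
    (by rw [hmin, hmax]; exact hgc.mono himage)
    (hg1.mono_set himage2)
    hg2
  simp only [Function.comp, Real.sin_neg, Real.sin_pi_div_two] at h
  norm_num at h
  exact h.symm
theorem stmt_2 (n : ℕ) :
    (∫ t in (-2 : ℝ)..2, t ^ n / (Real.pi * Real.sqrt (4 - t ^ 2)))
      = if Even n then (n.choose (n / 2) : ℝ) else 0 := by
  rw [subst_eq n]
  have hab : -(π/2) ≤ π/2 := by linarith [pi_pos]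
  have h0 : ∀ᵐ x : ℝ ∂volume, x ≠ π/2 := by
    rw [MeasureTheory.ae_iff]
    convert Real.volume_singleton (a := π/2) using 2
    ext x; simp
  have h1 : (∫ x in (-(π/2))..(π/2),
        (2 * Real.cos x) • ((2 * Real.sin x) ^ n / (π * Real.sqrt (4 - (2 * Real.sin x) ^ 2))))
      = ∫ x in (-(π/2))..(π/2), (2 * Real.sin x) ^ n / π := by
    apply intervalIntegral.integral_congr_ae
    filter_upwards [h0] with x hne hx
    rw [uIoc_of_le hab] at hx
    exact key_eq n ⟨hx.1, lt_of_le_of_ne hx.2 hne⟩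
  rw [h1]
  have h2 : (fun x : ℝ => (2 * Real.sin x) ^ n / π)
      = fun x : ℝ => (2 ^ n / π) * Real.sin x ^ n := by
    funext x; rw [mul_pow]; ring
  rw [h2, intervalIntegral.integral_const_mul]
  have h3 := intervalIntegral.integral_comp_sub_right
    (a := 0) (b := π) (fun x => Real.sin x ^ n) (π/2)
  simp only [Real.sin_sub_pi_div_two, zero_sub] at h3
  have hπ2 : π - π/2 = π/2 := by ring
  rw [hπ2] at h3
  rw [← h3]
  rcases Nat.even_or_odd n with he | ho
  · obtain ⟨m, hm⟩ := he
    have hn : n = 2 * m := by omega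
    subst hn
    simp only [if_pos (by exact ⟨m, by ring⟩ : Even (2*m))]
    have hnd : 2 * m / 2 = m := by omega
    rw [hnd]
    have : (fun x : ℝ => (-Real.cos x) ^ (2*m)) = fun x : ℝ => Real.cos x ^ (2*m) := by
      funext x; rw [(even_two_mul m).neg_pow (Real.cos x)]
    rw [this, cos_pow_even, binom_prod]
    have hpi : π ≠ 0 := pi_ne_zero
    have h4 : (2:ℝ) ^ (2 * m) = 4 ^ m := by rw [pow_mul]; norm_num
    rw [h4, div_mul_eq_mul_div, mul_comm π, ← mul_assoc, mul_div_assoc, div_self hpi, mul_one]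
  · obtain ⟨k, hk⟩ := ho
    subst hk
    rw [if_neg (by simp [Nat.even_add_one, parity_simps])]
    have : (fun x : ℝ => (-Real.cos x) ^ (2*k+1)) = fun x : ℝ => -(Real.cos x ^ (2*k+1)) := by
      funext x; rw [Odd.neg_pow ⟨k, by ring⟩]
    rw [this, intervalIntegral.integral_neg, cos_pow_odd]
    simp
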